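/- arXiv:2207.02131 — 12 statements merged into one kernel-verified Lean document; each statement's English description precedes it below -/
import Mathlib

section
/- (Proposition 1(i)) Let p, n be natural numbers with 0 < p < n, let X be a centered p×n real data matrix with QR factorization (1/√(n−1)) • Xᵀ = Q * R where Qᵀ * Q = 1 and R is upper triangular and invertible. Then Xᵀ * cov(X)⁻¹ * X = ((n:ℝ)−1) • (Q * Qᵀ); in particular, for every observation index i the squared Mahalanobis distance D²(i) = (X.col i) ⬝ᵥ (cov(X)⁻¹ *ᵥ X.col i) equals (n−1) · q i, where q i = ∑ j, (Q i j)^2 is the i-th statistical leverage score. -/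
open Matrix

/-- The sample covariance matrix of a centered data matrix. -/
noncomputable def cov {p n : ℕ} (X : Matrix (Fin p) (Fin n) ℝ) :
    Matrix (Fin p) (Fin p) ℝ :=
  ((n : ℝ) - 1)⁻¹ • (X * Xᵀ)

/-- Proposition 1(i): `Xᵀ * cov(X)⁻¹ * X = (n-1) • (Q * Qᵀ)`; in particular the squared
Mahalanobis distance of observation `i` equals `(n-1)` times the `i`-th statistical
leverage score `q i = ∑ j, (Q i j)^2`. -/
theorem stmt_3 {p n : ℕ} (hp : 0 < p) (hpn : p < n)
    (X : Matrix (Fin p) (Fin n) ℝ)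
    (hXc : X *ᵥ (fun _ => (1 : ℝ)) = 0)
    (Q : Matrix (Fin n) (Fin p) ℝ) (R : Matrix (Fin p) (Fin p) ℝ)
    (hQ : Qᵀ * Q = 1)
    (hR : R.BlockTriangular id)
    (hRdet : IsUnit R.det)
    (hQR : ((n : ℝ) - 1) ^ (-(1 : ℝ)/2) • Xᵀ = Q * R) :
    Xᵀ * (cov X)⁻¹ * X = ((n : ℝ) - 1) • (Q * Qᵀ) ∧
    ∀ i : Fin n,
      (fun k => X k i) ⬝ᵥ ((cov X)⁻¹ *ᵥ (fun k => X k i)) =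
        ((n : ℝ) - 1) * ∑ j, (Q i j) ^ 2 := by
  have hn : 2 ≤ n := lt_of_le_of_lt hp hpn
  have hc : (0:ℝ) < (n:ℝ) - 1 := by
    have : (2:ℝ) ≤ (n:ℝ) := by exact_mod_cast hn
    linarith
  set c : ℝ := (n:ℝ) - 1 with hcdef
  set s : ℝ := c ^ (-(1:ℝ)/2) with hsdef
  have hs_pos : 0 < s := Real.rpow_pos_of_pos hc _
  have hs2 : s ^ 2 = c⁻¹ := by
    rw [hsdef, ← Real.rpow_natCast (c ^ (-(1:ℝ)/2)) 2, ← Real.rpow_mul hc.le]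
    norm_num
    exact Real.rpow_neg_one c
  have hss : s * s = c⁻¹ := by rw [← hs2]; ring
  have hXT : Xᵀ = s⁻¹ • (Q * R) := by
    rw [← hQR, smul_smul, inv_mul_cancel₀ hs_pos.ne', one_smul]
  have hX : X = s⁻¹ • (Rᵀ * Qᵀ) := by
    have := congrArg Matrix.transpose hXT
    simpa [Matrix.transpose_smul, Matrix.transpose_mul] using this
  have hsc : s⁻¹ * s⁻¹ = c := by rw [← mul_inv, hss, inv_inv]
  have hcov : cov X = Rᵀ * R := by
    rw [cov, ← hcdef, hXT, hX, Matrix.smul_mul, Matrix.mul_smul, smul_smul, smul_smul]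
    have hmul : Rᵀ * Qᵀ * (Q * R) = Rᵀ * R := by
      rw [Matrix.mul_assoc, ← Matrix.mul_assoc Qᵀ, hQ, Matrix.one_mul]
    rw [hmul, mul_assoc, hsc, inv_mul_cancel₀ hc.ne', one_smul]
  have hRTdet : IsUnit Rᵀ.det := by rwa [Matrix.det_transpose]
  have hinv : (cov X)⁻¹ = R⁻¹ * (Rᵀ)⁻¹ := by
    rw [hcov, Matrix.mul_inv_rev]
  have hmain : Xᵀ * (cov X)⁻¹ * X = c • (Q * Qᵀ) := by
    rw [hinv, hXT, hX, Matrix.smul_mul, Matrix.mul_smul, Matrix.smul_mul, smul_smul]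
    have key : Q * R * (R⁻¹ * Rᵀ⁻¹) * (Rᵀ * Qᵀ) = Q * Qᵀ := by
      have h1 : Rᵀ⁻¹ * (Rᵀ * Qᵀ) = Qᵀ := by
        rw [← Matrix.mul_assoc, Matrix.nonsing_inv_mul _ hRTdet, Matrix.one_mul]
      rw [Matrix.mul_assoc (Q*R), Matrix.mul_assoc R⁻¹, h1, Matrix.mul_assoc Q, ← Matrix.mul_assoc R,
        Matrix.mul_nonsing_inv _ hRdet, Matrix.one_mul]
    rw [key, hsc]
  refine ⟨hmain, fun i => ?_⟩
  have h1 : (fun k => X k i) ⬝ᵥ ((cov X)⁻¹ *ᵥ (fun k => X k i))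
      = (Xᵀ * (cov X)⁻¹ * X) i i := by
    simp only [Matrix.mul_apply, Matrix.mulVec, dotProduct, Matrix.transpose_apply,
      Finset.sum_mul, Finset.mul_sum]
    rw [Finset.sum_comm]
    exact Finset.sum_congr rfl fun k _ => Finset.sum_congr rfl fun l _ => by ring
  rw [h1, hmain]
  simp [Matrix.mul_apply, Finset.mul_sum, sq]
end

section
/- (Proposition 1(ii)) Let p, n be natural numbers with 0 < p < n, let X be a centered p×n real data matrix with QR factorization (1/√(n−1)) • Xᵀ = Q * R where Qᵀ * Q = 1 and R is upper triangular and invertible, and let w : ℝ → ℝ be a weight function. Then the one-step M-scatter matrix cov_w(X) = (n:ℝ)⁻¹ • ∑ i, w(D²(i)) • (X.col i) ⊗ (X.col i) equals (n:ℝ)⁻¹ • X * Matrix.diagonal (fun i => w(((n:ℝ)−1) * q i)) * Xᵀ, where q i = ∑ j, (Q i j)^2. -/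
open Matrix

/-- The squared Mahalanobis distance of observation `i` of the centered data matrix `X`. -/
noncomputable def mahalanobisSq {p n : ℕ} (X : Matrix (Fin p) (Fin n) ℝ) (i : Fin n) : ℝ :=
  (fun k => X k i) ⬝ᵥ ((cov X)⁻¹ *ᵥ (fun k => X k i))

/-- The one-step M-scatter matrix of `X` with weight function `w`. -/
noncomputable def covW {p n : ℕ} (w : ℝ → ℝ) (X : Matrix (Fin p) (Fin n) ℝ) :
    Matrix (Fin p) (Fin p) ℝ :=
  (n : ℝ)⁻¹ • ∑ i, w (mahalanobisSq X i) • vecMulVec (fun k => X k i) (fun k => X k i)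

/-- Proposition 1(ii): the one-step M-scatter matrix `cov_w(X)` can be computed from the
QR factorization as `(1/n) • X * Diag(w((n-1) q_i)) • Xᵀ`, where
`q i = ∑ j, (Q i j)^2` are the leverage scores. -/
theorem stmt_4 {p n : ℕ} (hp : 0 < p) (hpn : p < n)
    (X : Matrix (Fin p) (Fin n) ℝ)
    (hXc : X *ᵥ (fun _ => (1 : ℝ)) = 0)
    (Q : Matrix (Fin n) (Fin p) ℝ) (R : Matrix (Fin p) (Fin p) ℝ)
    (hQ : Qᵀ * Q = 1)
    (hR : R.BlockTriangular id)
    (hRdet : IsUnit R.det)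
    (hQR : ((n : ℝ) - 1) ^ (-(1 : ℝ)/2) • Xᵀ = Q * R)
    (w : ℝ → ℝ) :
    covW w X =
      (n : ℝ)⁻¹ •
        (X * Matrix.diagonal (fun i => w (((n : ℝ) - 1) * ∑ j, (Q i j) ^ 2)) * Xᵀ) := by
  set c : ℝ := (n : ℝ) - 1 with hc_def
  have hc : 0 < c := by
    have : (2 : ℕ) ≤ n := by omega
    have : (2 : ℝ) ≤ (n : ℝ) := by exact_mod_cast this
    simp only [hc_def]; linarith
  set s : ℝ := c ^ ((1 : ℝ)/2) with hs_def
  have hs_pos : 0 < s := Real.rpow_pos_of_pos hc _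
  have hss : s * s = c := by
    rw [hs_def, ← Real.rpow_add hc]; norm_num
  -- Xᵀ = s • (Q * R)
  have hXT : Xᵀ = s • (Q * R) := by
    rw [← hQR, smul_smul, hs_def, ← Real.rpow_add hc]
    norm_num
  have hX : X = s • (Rᵀ * Qᵀ) := by
    have := congrArg Matrix.transpose hXT
    simpa [Matrix.transpose_smul, Matrix.transpose_mul] using this
  -- cov X = Rᵀ * R
  have hcov : cov X = Rᵀ * R := by
    rw [cov, ← hc_def, ← Matrix.transpose_transpose X, hXT]
    simp only [Matrix.transpose_smul, Matrix.transpose_mul, Matrix.transpose_transpose]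
    rw [Matrix.smul_mul, Matrix.mul_smul, smul_smul, smul_smul, mul_assoc, hss]
    rw [Matrix.mul_assoc, ← Matrix.mul_assoc Qᵀ Q R, hQ, Matrix.one_mul,
      inv_mul_cancel₀ (ne_of_gt hc), one_smul]
  have hRTdet : IsUnit Rᵀ.det := by rwa [Matrix.det_transpose]
  have hcovinv : (cov X)⁻¹ = R⁻¹ * (Rᵀ)⁻¹ := by
    rw [hcov, Matrix.mul_inv_rev]
  -- the column of X
  have hmah : ∀ i, mahalanobisSq X i = c * ∑ j, (Q i j) ^ 2 := by
    intro i
    have hxcol : (fun k => X k i) = Rᵀ *ᵥ (s • fun j => Q i j) := by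
      funext k
      rw [hX]
      simp [Matrix.mulVec, dotProduct, Matrix.mul_apply, Finset.mul_sum,
        mul_comm, mul_left_comm, mul_assoc]
    rw [mahalanobisSq, hcovinv, hxcol, Matrix.mulVec_mulVec, Matrix.mul_assoc,
      Matrix.nonsing_inv_mul _ hRTdet, Matrix.mul_one, Matrix.mulVec_transpose,
      ← Matrix.dotProduct_mulVec, Matrix.mulVec_mulVec,
      Matrix.mul_nonsing_inv _ hRdet, Matrix.one_mulVec]
    simp only [dotProduct, Pi.smul_apply, smul_eq_mul]
    rw [Finset.mul_sum]
    refine Finset.sum_congr rfl fun j _ => ?_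
    rw [← hss]; ring
  -- now the matrix identity
  have hdiag : ∀ (d : Fin n → ℝ) (k l : Fin p),
      (X * Matrix.diagonal d * Xᵀ) k l = ∑ i, d i * (X k i * X l i) := by
    intro d k l
    rw [Matrix.mul_apply]
    refine Finset.sum_congr rfl fun i _ => ?_
    rw [Matrix.mul_diagonal, Matrix.transpose_apply]
    ring
  rw [covW]
  congr 1
  ext k l
  rw [hdiag]
  simp only [Finset.sum_apply, Matrix.sum_apply, Matrix.smul_apply, Matrix.vecMulVec_apply,
    smul_eq_mul]
  refine Finset.sum_congr rfl fun i _ => ?_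
  rw [hmah i]
end

section
/- Let p, n be natural numbers with 0 < p < n, let X be a centered p×n real data matrix with QR factorization (1/√(n−1)) • Xᵀ = Q * R where Qᵀ * Q = 1 and R is upper triangular and invertible. With W = cov(X)^{1/2} * R⁻¹ (so W is orthogonal) and cov(X)^{−1/2} = (cov(X)^{1/2})⁻¹, one has Xᵀ * cov(X)^{−1/2} = √((n:ℝ)−1) • (Q * Wᵀ), and equivalently cov(X)^{−1/2} * X = √((n:ℝ)−1) • (W * Qᵀ). -/
open Matrix

/-- With `S = cov(X)^{1/2}` the positive semidefinite symmetric square root of the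
covariance matrix, `W = S * R⁻¹` orthogonal, and `cov(X)^{-1/2} = S⁻¹`, one has
`Xᵀ * cov(X)^{-1/2} = √(n-1) • (Q * Wᵀ)` and `cov(X)^{-1/2} * X = √(n-1) • (W * Qᵀ)`. -/
theorem stmt_5 {p n : ℕ} (hp : 0 < p) (hpn : p < n)
    (X : Matrix (Fin p) (Fin n) ℝ)
    (hXc : X *ᵥ (fun _ => (1 : ℝ)) = 0)
    (Q : Matrix (Fin n) (Fin p) ℝ) (R : Matrix (Fin p) (Fin p) ℝ)
    (hQ : Qᵀ * Q = 1)
    (hR : R.BlockTriangular id)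
    (hRdet : IsUnit R.det)
    (hQR : ((n : ℝ) - 1) ^ (-(1 : ℝ)/2) • Xᵀ = Q * R)
    (S : Matrix (Fin p) (Fin p) ℝ)
    (hS : S.PosSemidef)
    (hSsq : S * S = cov X) :
    Xᵀ * S⁻¹ = Real.sqrt ((n : ℝ) - 1) • (Q * (S * R⁻¹)ᵀ) ∧
    S⁻¹ * X = Real.sqrt ((n : ℝ) - 1) • ((S * R⁻¹) * Qᵀ) := by
  have hn1 : (0 : ℝ) < (n : ℝ) - 1 := by
    have : 2 ≤ n := by omega
    have : (2 : ℝ) ≤ (n : ℝ) := by exact_mod_cast this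
    linarith
  set c : ℝ := Real.sqrt ((n : ℝ) - 1) with hc
  have hcpos : 0 < c := Real.sqrt_pos.mpr hn1
  have hcmul : c * ((n : ℝ) - 1) ^ (-(1 : ℝ)/2) = 1 := by
    rw [hc, Real.sqrt_eq_rpow, ← Real.rpow_add hn1]
    norm_num
  have hX : Xᵀ = c • (Q * R) := by
    have h := congrArg (fun M => c • M) hQR
    simpa [smul_smul, hcmul] using h
  have hc2 : c * c = (n : ℝ) - 1 := Real.mul_self_sqrt hn1.le
  have hcov : cov X = Rᵀ * R := by
    have hX' : X = c • (Rᵀ * Qᵀ) := by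
      have := congrArg Matrix.transpose hX
      simpa [Matrix.transpose_smul, Matrix.transpose_mul] using this
    rw [cov, hX']
    simp only [Matrix.transpose_smul, Matrix.transpose_mul, Matrix.transpose_transpose,
      Matrix.smul_mul, Matrix.mul_smul, smul_smul]
    rw [hc2, inv_mul_cancel₀ hn1.ne', one_smul]
    rw [Matrix.mul_assoc, ← Matrix.mul_assoc Qᵀ, hQ, Matrix.one_mul]
  have hSS : S * S = Rᵀ * R := hSsq.trans hcov
  have hRdet' : (R.det : ℝ) ≠ 0 := by
    simpa [isUnit_iff_ne_zero] using hRdet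
  have hSdet : IsUnit S.det := by
    have h := congrArg Matrix.det hSS
    rw [Matrix.det_mul, Matrix.det_mul, Matrix.det_transpose] at h
    rw [isUnit_iff_ne_zero]
    intro h0
    rw [h0, mul_zero] at h
    exact (mul_ne_zero hRdet' hRdet') h.symm
  have hRtdet : IsUnit Rᵀ.det := by rwa [Matrix.det_transpose]
  have hSt : Sᵀ = S := by have h : S.IsSymm := by simpa using hS.1
                          exact h
  have hkey : R * S⁻¹ = Rᵀ⁻¹ * S := by
    calc R * S⁻¹ = Rᵀ⁻¹ * (Rᵀ * (R * S⁻¹)) := by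
          rw [← Matrix.mul_assoc, Matrix.nonsing_inv_mul _ hRtdet, Matrix.one_mul]
      _ = Rᵀ⁻¹ * (S * S * S⁻¹) := by rw [← Matrix.mul_assoc Rᵀ, ← hSS]
      _ = Rᵀ⁻¹ * S := by
          rw [Matrix.mul_assoc S, Matrix.mul_nonsing_inv _ hSdet, Matrix.mul_one]
  have h1 : Xᵀ * S⁻¹ = c • (Q * (S * R⁻¹)ᵀ) := by
    rw [hX, Matrix.smul_mul, Matrix.transpose_mul, Matrix.transpose_nonsing_inv, hSt,
      Matrix.mul_assoc, hkey]
  refine ⟨h1, ?_⟩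
  have h2 := congrArg Matrix.transpose h1
  rw [Matrix.transpose_mul, Matrix.transpose_transpose, Matrix.transpose_smul,
    Matrix.transpose_mul, Matrix.transpose_transpose, Matrix.transpose_nonsing_inv, hSt] at h2
  exact h2
end

section
/- Let p, n be natural numbers with 0 < p < n, let X be a centered p×n real data matrix with QR factorization (1/√(n−1)) • Xᵀ = Q * R where Qᵀ * Q = 1 and R is upper triangular and invertible, and let w : ℝ → ℝ. Then the ICS matrix M(X) = cov(X)^{−1/2} * cov_w(X) * cov(X)^{−1/2} satisfies M(X) = (((n:ℝ)−1)/n) • W * Qᵀ * Matrix.diagonal (fun i => w(((n:ℝ)−1) * q i)) * Q * Wᵀ, where W = cov(X)^{1/2} * R⁻¹ is orthogonal and q i = ∑ j, (Q i j)^2. -/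
open Matrix

lemma sum_smul_vecMulVec {p n : ℕ} (A : Matrix (Fin p) (Fin n) ℝ) (d : Fin n → ℝ) :
    ∑ i, d i • vecMulVec (fun k => A k i) (fun k => A k i) = A * Matrix.diagonal d * Aᵀ := by
  ext k l
  rw [Matrix.mul_assoc]
  simp only [Matrix.sum_apply, Matrix.smul_apply, vecMulVec_apply, Matrix.mul_apply,
    Matrix.diagonal_mul, Matrix.transpose_apply, smul_eq_mul]
  exact Finset.sum_congr rfl (fun i _ => by
    simp [Matrix.diagonal_apply, ite_mul, Finset.mul_sum]; ring)

lemma dot_eq_entry {p n : ℕ} (X : Matrix (Fin p) (Fin n) ℝ) (M : Matrix (Fin p) (Fin p) ℝ)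
    (i : Fin n) :
    (fun k => X k i) ⬝ᵥ (M *ᵥ (fun k => X k i)) = (Xᵀ * M * X) i i := by
  simp only [dotProduct, Matrix.mulVec, Matrix.mul_apply, Matrix.transpose_apply, dotProduct,
    Finset.sum_mul, Finset.mul_sum]
  rw [Finset.sum_comm]
  exact Finset.sum_congr rfl (fun a _ => Finset.sum_congr rfl (fun b _ => by ring))

/-- The ICS matrix `M(X) = cov(X)^{-1/2} * cov_w(X) * cov(X)^{-1/2}` equals
`((n-1)/n) • W * Qᵀ * Diag(w((n-1) q_i)) * Q * Wᵀ` where `W = cov(X)^{1/2} * R⁻¹`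
is orthogonal and `q i = ∑ j, (Q i j)^2` are the leverage scores. -/
theorem stmt_6 {p n : ℕ} (hp : 0 < p) (hpn : p < n)
    (X : Matrix (Fin p) (Fin n) ℝ)
    (hXc : X *ᵥ (fun _ => (1 : ℝ)) = 0)
    (Q : Matrix (Fin n) (Fin p) ℝ) (R : Matrix (Fin p) (Fin p) ℝ)
    (hQ : Qᵀ * Q = 1)
    (hR : R.BlockTriangular id)
    (hRdet : IsUnit R.det)
    (hQR : ((n : ℝ) - 1) ^ (-(1 : ℝ)/2) • Xᵀ = Q * R)
    (w : ℝ → ℝ)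
    (S : Matrix (Fin p) (Fin p) ℝ)
    (hS : S.PosSemidef)
    (hSsq : S * S = cov X) :
    S⁻¹ * covW w X * S⁻¹ =
      (((n : ℝ) - 1) / (n : ℝ)) •
        ((S * R⁻¹) * Qᵀ * Matrix.diagonal (fun i => w (((n : ℝ) - 1) * ∑ j, (Q i j) ^ 2)) *
          Q * (S * R⁻¹)ᵀ) := by
  have hn1 : (0:ℝ) < (n:ℝ) - 1 := by
    have h1 : (1:ℕ) < n := lt_of_le_of_lt hp hpn
    have : (1:ℝ) < (n:ℝ) := by exact_mod_cast h1
    linarith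
  set c : ℝ := ((n:ℝ)-1) ^ (-(1:ℝ)/2) with hc
  have hcpos : 0 < c := Real.rpow_pos_of_pos hn1 _
  have hcc : c * c = ((n:ℝ)-1)⁻¹ := by
    rw [hc, ← Real.rpow_add hn1]
    norm_num
    rw [Real.rpow_neg_one]
  have hcinv : c⁻¹ * c⁻¹ = (n:ℝ)-1 := by
    rw [← mul_inv, hcc, inv_inv]
  have hXt : Xᵀ = c⁻¹ • (Q * R) := by
    rw [← hQR, smul_smul, inv_mul_cancel₀ hcpos.ne', one_smul]
  have hX : X = c⁻¹ • (Rᵀ * Qᵀ) := by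
    have := congrArg Matrix.transpose hXt
    simpa [Matrix.transpose_smul, Matrix.transpose_mul] using this
  have hRdet' : R.det ≠ 0 := by simpa [isUnit_iff_ne_zero] using hRdet
  have hRtdet : (Rᵀ).det ≠ 0 := by simpa [Matrix.det_transpose] using hRdet'
  have hRR : R * R⁻¹ = 1 := Matrix.mul_nonsing_inv R (isUnit_iff_ne_zero.mpr hRdet')
  have hRR' : R⁻¹ * R = 1 := Matrix.nonsing_inv_mul R (isUnit_iff_ne_zero.mpr hRdet')
  have hRtR : Rᵀ⁻¹ * Rᵀ = 1 := Matrix.nonsing_inv_mul Rᵀ (isUnit_iff_ne_zero.mpr hRtdet)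
  have hXX : X * Xᵀ = ((n:ℝ)-1) • (Rᵀ * R) := by
    rw [hXt, hX, Matrix.smul_mul, Matrix.mul_smul, smul_smul, hcinv]
    congr 1
    rw [Matrix.mul_assoc, ← Matrix.mul_assoc Qᵀ, hQ, Matrix.one_mul]
  have hcov : cov X = Rᵀ * R := by
    rw [cov, hXX, smul_smul, inv_mul_cancel₀ (ne_of_gt hn1), one_smul]
  -- Mahalanobis distances
  have hMmat : Xᵀ * (cov X)⁻¹ * X = ((n:ℝ)-1) • (Q * Qᵀ) := by
    rw [hcov, Matrix.mul_inv_rev, hXt, hX]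
    rw [Matrix.smul_mul, Matrix.smul_mul, Matrix.mul_smul, smul_smul, hcinv]
    congr 1
    calc Q * R * (R⁻¹ * Rᵀ⁻¹) * (Rᵀ * Qᵀ)
        = Q * (R * R⁻¹) * (Rᵀ⁻¹ * Rᵀ) * Qᵀ := by
          simp only [Matrix.mul_assoc]
      _ = Q * Qᵀ := by rw [hRR, hRtR, Matrix.mul_one, Matrix.mul_one]
  have hM : ∀ i, mahalanobisSq X i = ((n:ℝ)-1) * ∑ j, (Q i j) ^ 2 := by
    intro i
    rw [mahalanobisSq, dot_eq_entry, hMmat]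
    simp [Matrix.mul_apply, sq, Finset.mul_sum]
  -- covW
  set D : Matrix (Fin n) (Fin n) ℝ :=
    Matrix.diagonal (fun i => w (((n:ℝ)-1) * ∑ j, (Q i j) ^ 2)) with hD
  have hcovW : covW w X = (((n:ℝ)-1)/(n:ℝ)) • (Rᵀ * Qᵀ * D * Q * R) := by
    rw [covW]
    have hsum : ∑ i, w (mahalanobisSq X i) • vecMulVec (fun k => X k i) (fun k => X k i)
        = X * D * Xᵀ := by
      rw [hD, ← sum_smul_vecMulVec]
      exact Finset.sum_congr rfl (fun i _ => by rw [hM i])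
    have hXDX : X * D * Xᵀ = ((n:ℝ)-1) • (Rᵀ * Qᵀ * D * Q * R) := by
      rw [hXt, hX, Matrix.smul_mul, Matrix.smul_mul, Matrix.mul_smul, smul_smul, hcinv]
      congr 1
      simp only [Matrix.mul_assoc]
    rw [hsum, hXDX, smul_smul, div_eq_mul_inv, mul_comm ((n:ℝ)-1)]
  -- S facts
  have hSt : Sᵀ = S := by
    have h := hS.1
    simpa [Matrix.IsHermitian, Matrix.conjTranspose_eq_transpose_of_trivial] using h
  have hSdet : IsUnit S.det := by
    have h2 : S.det * S.det = R.det * R.det := by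
      have := congrArg Matrix.det (hSsq.trans hcov)
      simpa [Matrix.det_mul, Matrix.det_transpose, mul_comm] using this
    refine isUnit_iff_ne_zero.mpr (fun h0 => ?_)
    rw [h0, zero_mul] at h2
    exact hRdet' (by nlinarith)
  have hSS : S⁻¹ * S = 1 := Matrix.nonsing_inv_mul S hSdet
  have hSS' : S * S⁻¹ = 1 := Matrix.mul_nonsing_inv S hSdet
  have hkey : S⁻¹ * Rᵀ = S * R⁻¹ := by
    have : S⁻¹ * Rᵀ * (R * R⁻¹) = S⁻¹ * (S * S) * R⁻¹ := by
      rw [hSsq, hcov]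
      simp only [Matrix.mul_assoc]
    rw [hRR, Matrix.mul_one] at this
    rw [this, ← Matrix.mul_assoc, hSS, Matrix.one_mul]
  have hkey2 : R * S⁻¹ = (S * R⁻¹)ᵀ := by
    have h := congrArg Matrix.transpose hkey
    rw [Matrix.transpose_mul, Matrix.transpose_mul, Matrix.transpose_nonsing_inv,
      Matrix.transpose_transpose, hSt] at h
    rw [Matrix.transpose_mul, hSt]
    exact h
  -- assemble
  rw [hcovW, Matrix.mul_smul, Matrix.smul_mul]
  congr 1
  calc S⁻¹ * (Rᵀ * Qᵀ * D * Q * R) * S⁻¹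
      = (S⁻¹ * Rᵀ) * Qᵀ * D * Q * (R * S⁻¹) := by simp only [Matrix.mul_assoc]
    _ = (S * R⁻¹) * Qᵀ * D * Q * (S * R⁻¹)ᵀ := by rw [hkey, hkey2]
end

section
/- Let p, n be natural numbers with 0 < p < n, let X be a centered p×n real data matrix with QR factorization (1/√(n−1)) • Xᵀ = Q * R where Qᵀ * Q = 1 and R is upper triangular and invertible, and let w : ℝ → ℝ. Define M(X) = cov(X)^{−1/2} * cov_w(X) * cov(X)^{−1/2} and M̃(X) = (((n:ℝ)−1)/n) • Qᵀ * Matrix.diagonal (fun i => w(((n:ℝ)−1) * q i)) * Q. Then M(X) and M̃(X) have the same characteristic polynomial (hence the same eigenvalues with multiplicities), so any function of the eigenvalues of M(X) can be computed from Q alone. -/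
open Matrix Polynomial

lemma charpoly_conj_aux {p : ℕ} (U A : Matrix (Fin p) (Fin p) ℝ) (hU : IsUnit U.det) :
    (U⁻¹ * A * U).charpoly = A.charpoly := by
  set f : Matrix (Fin p) (Fin p) ℝ →+* Matrix (Fin p) (Fin p) ℝ[X] := (Polynomial.C : ℝ →+* ℝ[X]).mapMatrix with hf
  have hUV : U⁻¹ * U = 1 := nonsing_inv_mul U hU
  have hVV : f U⁻¹ * f U = 1 := by rw [← _root_.map_mul, hUV, _root_.map_one]
  have hcm : ∀ B : Matrix (Fin p) (Fin p) ℝ,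
      charmatrix B = (Polynomial.X : ℝ[X]) • (1 : Matrix (Fin p) (Fin p) ℝ[X]) - f B := by
    intro B
    ext i j
    rw [charmatrix_apply]
    by_cases h : i = j <;>
      simp [h, Matrix.one_apply, Matrix.diagonal_apply, Matrix.smul_apply, f]
  have key : charmatrix (U⁻¹ * A * U) = f U⁻¹ * charmatrix A * f U := by
    rw [hcm, hcm, mul_sub, sub_mul]
    congr 1
    · rw [mul_smul_comm, mul_one, smul_mul_assoc, hVV]
    · rw [_root_.map_mul, _root_.map_mul]
  have hdet : (f U⁻¹).det * (f U).det = 1 := by rw [← det_mul, hVV, det_one]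
  rw [Matrix.charpoly, key, det_mul, det_mul, mul_right_comm, hdet, one_mul, Matrix.charpoly]

lemma rankone_conj {p : ℕ} (R : Matrix (Fin p) (Fin p) ℝ) (u : Fin p → ℝ) :
    vecMulVec (Rᵀ *ᵥ u) (Rᵀ *ᵥ u) = Rᵀ * vecMulVec u u * R := by
  ext k l
  simp only [vecMulVec_apply, Matrix.mul_apply, mulVec, dotProduct, transpose_apply,
    Finset.sum_mul, Finset.mul_sum]
  exact Finset.sum_congr rfl fun j _ => Finset.sum_congr rfl fun j' _ => by ring

lemma diag_decomp {p n : ℕ} (Q : Matrix (Fin n) (Fin p) ℝ) (d : Fin n → ℝ) :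
    Qᵀ * Matrix.diagonal d * Q = ∑ i, d i • vecMulVec (fun j => Q i j) (fun j => Q i j) := by
  ext k l
  simp only [Matrix.mul_apply, diagonal_apply, transpose_apply, Matrix.sum_apply,
    Matrix.smul_apply, vecMulVec_apply, smul_eq_mul, Finset.mul_sum, Finset.sum_mul,
    mul_ite, ite_mul, zero_mul, mul_zero]
  refine Finset.sum_congr rfl fun i _ => ?_
  rw [Finset.sum_ite_eq' Finset.univ i]
  simp only [Finset.mem_univ, if_true, smul_eq_mul]
  ring


/-- The ICS matrix `M(X) = cov(X)^{-1/2} * cov_w(X) * cov(X)^{-1/2}` and the matrix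
`M̃(X) = ((n-1)/n) • Qᵀ * Diag(w((n-1) q_i)) * Q` have the same characteristic polynomial,
hence the same eigenvalues with multiplicities. -/
theorem stmt_7 {p n : ℕ} (hp : 0 < p) (hpn : p < n)
    (X : Matrix (Fin p) (Fin n) ℝ)
    (hXc : X *ᵥ (fun _ => (1 : ℝ)) = 0)
    (Q : Matrix (Fin n) (Fin p) ℝ) (R : Matrix (Fin p) (Fin p) ℝ)
    (hQ : Qᵀ * Q = 1)
    (hR : R.BlockTriangular id)
    (hRdet : IsUnit R.det)
    (hQR : ((n : ℝ) - 1) ^ (-(1 : ℝ)/2) • Xᵀ = Q * R)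
    (w : ℝ → ℝ)
    (S : Matrix (Fin p) (Fin p) ℝ)
    (hS : S.PosSemidef)
    (hSsq : S * S = cov X) :
    (S⁻¹ * covW w X * S⁻¹).charpoly =
      ((((n : ℝ) - 1) / (n : ℝ)) •
        (Qᵀ * Matrix.diagonal (fun i => w (((n : ℝ) - 1) * ∑ j, (Q i j) ^ 2)) * Q)).charpoly := by
  set a : ℝ := (n : ℝ) - 1 with ha_def
  have hn2 : 2 ≤ n := lt_of_le_of_lt hp hpn
  have ha : 0 < a := by
    have : (2 : ℝ) ≤ (n : ℝ) := by exact_mod_cast hn2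
    simp only [ha_def]; linarith
  have ha0 : a ≠ 0 := ha.ne'
  set c : ℝ := a ^ (-(1 : ℝ)/2) with hc_def
  have hc0 : c ≠ 0 := (Real.rpow_pos_of_pos ha _).ne'
  have hcc : c * c = a⁻¹ := by
    rw [hc_def, ← Real.rpow_add ha]
    norm_num [Real.rpow_neg_one]
  have hci : c⁻¹ * c⁻¹ = a := by
    rw [← mul_inv, hcc, inv_inv]
  -- basic factorization facts
  have hXT : Xᵀ = c⁻¹ • (Q * R) := by
    rw [← hQR, smul_smul, inv_mul_cancel₀ hc0, one_smul]
  have hX : X = c⁻¹ • (Rᵀ * Qᵀ) := by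
    have := congrArg Matrix.transpose hXT
    simpa [Matrix.transpose_smul, Matrix.transpose_mul] using this
  have hXX : X * Xᵀ = a • (Rᵀ * R) := by
    rw [hX, Matrix.transpose_smul, Matrix.transpose_mul, Matrix.transpose_transpose,
      Matrix.transpose_transpose, Matrix.smul_mul, Matrix.mul_smul, smul_smul, hci]
    congr 1
    rw [Matrix.mul_assoc, ← Matrix.mul_assoc Qᵀ, hQ, Matrix.one_mul]
  have hcov : cov X = Rᵀ * R := by
    rw [cov, hXX, smul_smul, inv_mul_cancel₀ ha0, one_smul]
  have hRTdet : IsUnit Rᵀ.det := by rwa [det_transpose]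
  have hRR : R * R⁻¹ = 1 := mul_nonsing_inv R hRdet
  have hcovinv : (cov X)⁻¹ = R⁻¹ * Rᵀ⁻¹ := by rw [hcov, Matrix.mul_inv_rev]
  -- columns of X
  have hcol : ∀ i, (fun k => X k i) = c⁻¹ • (Rᵀ *ᵥ (fun j => Q i j)) := by
    intro i
    funext k
    simp [hX, mulVec, dotProduct, Matrix.mul_apply, Finset.mul_sum]
  -- Mahalanobis distances
  have hMah : ∀ i, mahalanobisSq X i = a * ∑ j, (Q i j) ^ 2 := by
    intro i
    set q : Fin p → ℝ := fun j => Q i j with hq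
    rw [mahalanobisSq, hcol i, hcovinv]
    rw [mulVec_smul, mulVec_mulVec, mul_assoc, Matrix.nonsing_inv_mul Rᵀ hRTdet, mul_one,
      smul_dotProduct, dotProduct_smul, smul_eq_mul, smul_eq_mul, ← mul_assoc, hci]
    congr 1
    rw [mulVec_transpose, ← dotProduct_mulVec, mulVec_mulVec, hRR, one_mulVec]
    exact Finset.sum_congr rfl fun j _ => (sq (q j)).symm ▸ (sq (Q i j)) ▸ by rw [pow_two]
  -- the diagonal weight matrix
  set d : Fin n → ℝ := fun i => w (a * ∑ j, (Q i j) ^ 2) with hd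
  set K : Matrix (Fin p) (Fin p) ℝ := Qᵀ * Matrix.diagonal d * Q with hK
  -- covW computation
  have hvmv : ∀ i, vecMulVec (fun k => X k i) (fun k => X k i) =
      a • (Rᵀ * vecMulVec (fun j => Q i j) (fun j => Q i j) * R) := by
    intro i
    rw [← rankone_conj, hcol i]
    ext k l
    simp only [vecMulVec_apply, Pi.smul_apply, Matrix.smul_apply, smul_eq_mul, ← hci]
    ring
  have hsum : ∑ i, w (mahalanobisSq X i) • vecMulVec (fun k => X k i) (fun k => X k i)
      = a • (Rᵀ * K * R) := by
    rw [hK, diag_decomp, Matrix.mul_sum, Matrix.sum_mul, Finset.smul_sum]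
    refine Finset.sum_congr rfl fun i _ => ?_
    rw [hMah i, hvmv i, Matrix.mul_smul, Matrix.smul_mul, smul_comm a]
  have hcovW : covW w X = ((n : ℝ)⁻¹ * a) • (Rᵀ * K * R) := by
    rw [covW, hsum, smul_smul]
  -- S is invertible
  have hSdet : IsUnit S.det := by
    have : IsUnit (S.det * S.det) := by
      rw [← det_mul, hSsq, hcov, det_mul]
      exact hRTdet.mul hRdet
    exact isUnit_of_mul_isUnit_left this
  set U : Matrix (Fin p) (Fin p) ℝ := R * S⁻¹ with hU
  have hUinv : U⁻¹ = S * R⁻¹ := by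
    rw [hU, Matrix.mul_inv_rev, nonsing_inv_nonsing_inv S hSdet]
  have hUdet : IsUnit U.det := by
    rw [hU, det_mul]
    exact hRdet.mul (isUnit_nonsing_inv_det S hSdet)
  have hSR : S⁻¹ * Rᵀ = S * R⁻¹ := by
    have h1 : Rᵀ = S * (S * R⁻¹) := by
      rw [← mul_assoc, hSsq, hcov, mul_assoc, hRR, mul_one]
    rw [h1, ← mul_assoc, Matrix.nonsing_inv_mul S hSdet, one_mul]
  -- conjugation form
  have hM : S⁻¹ * covW w X * S⁻¹ = U⁻¹ * (((n : ℝ)⁻¹ * a) • K) * U := by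
    rw [hcovW, Matrix.mul_smul, Matrix.smul_mul, hUinv, hU,
      Matrix.mul_smul, Matrix.smul_mul]
    congr 1
    rw [← mul_assoc, ← mul_assoc, hSR, mul_assoc, mul_assoc]
  rw [hM, charpoly_conj_aux _ _ hUdet]
  congr 2
  rw [div_eq_mul_inv, mul_comm]
end

section
/- (Correctness of the QR-based ICS algorithm) Let p, n be natural numbers with 0 < p < n, let X be a centered p×n real data matrix with QR factorization (1/√(n−1)) • Xᵀ = Q * R where Qᵀ * Q = 1 and R is upper triangular and invertible, and let w : ℝ → ℝ. Set M̃(X) = (((n:ℝ)−1)/n) • Qᵀ * Matrix.diagonal (fun i => w(((n:ℝ)−1) * q i)) * Q and suppose M̃(X) = U * D * Uᵀ where U is orthogonal (Uᵀ * U = 1) and D is diagonal. Then the matrix B = Uᵀ * (Rᵀ)⁻¹ jointly diagonalizes the two scatter matrices: B * cov(X) * Bᵀ = 1 and B * cov_w(X) * Bᵀ = D. -/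
open Matrix

lemma aux_vmv {p : ℕ} (A : Matrix (Fin p) (Fin p) ℝ) (u : Fin p → ℝ) :
    vecMulVec (A *ᵥ u) (A *ᵥ u) = A * vecMulVec u u * Aᵀ := by
  ext k l
  simp only [vecMulVec_apply, mul_apply, mulVec, dotProduct, transpose_apply]
  rw [Finset.sum_mul_sum, Finset.sum_comm]
  congr 1; ext j'
  rw [Finset.sum_mul]
  congr 1; ext j
  ring

lemma aux_vmv_smul {p : ℕ} (a : ℝ) (u : Fin p → ℝ) :
    vecMulVec (a • u) (a • u) = (a * a) • vecMulVec u u := by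
  ext k l
  simp only [vecMulVec_apply, Pi.smul_apply, Matrix.smul_apply, smul_eq_mul]
  ring

lemma aux_sum_vmv {p n : ℕ} (Q : Matrix (Fin n) (Fin p) ℝ) (f : Fin n → ℝ) :
    Qᵀ * Matrix.diagonal f * Q = ∑ i, f i • vecMulVec (fun j => Q i j) (fun j => Q i j) := by
  ext k l
  rw [Matrix.sum_apply]
  simp only [Matrix.mul_assoc, mul_apply, Matrix.diagonal_mul, transpose_apply,
    Pi.smul_apply, vecMulVec_apply, smul_eq_mul, Matrix.smul_apply]
  refine Finset.sum_congr rfl fun i _ => ?_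
  simp [diagonal_apply, mul_ite, Finset.sum_ite_eq]
  ring

/-- Correctness of the QR-based ICS algorithm: if
`M̃(X) = ((n-1)/n) • Qᵀ * Diag(w((n-1) q_i)) * Q = U * D * Uᵀ` with `U` orthogonal and
`D` diagonal, then `B = Uᵀ * (Rᵀ)⁻¹` jointly diagonalizes the two scatter matrices:
`B * cov(X) * Bᵀ = 1` and `B * cov_w(X) * Bᵀ = D`. -/
theorem stmt_8 {p n : ℕ} (hp : 0 < p) (hpn : p < n)
    (X : Matrix (Fin p) (Fin n) ℝ)
    (hXc : X *ᵥ (fun _ => (1 : ℝ)) = 0)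
    (Q : Matrix (Fin n) (Fin p) ℝ) (R : Matrix (Fin p) (Fin p) ℝ)
    (hQ : Qᵀ * Q = 1)
    (hR : R.BlockTriangular id)
    (hRdet : IsUnit R.det)
    (hQR : ((n : ℝ) - 1) ^ (-(1 : ℝ)/2) • Xᵀ = Q * R)
    (w : ℝ → ℝ)
    (U : Matrix (Fin p) (Fin p) ℝ) (hU : Uᵀ * U = 1)
    (d : Fin p → ℝ)
    (hUD : (((n : ℝ) - 1) / (n : ℝ)) •
        (Qᵀ * Matrix.diagonal (fun i => w (((n : ℝ) - 1) * ∑ j, (Q i j) ^ 2)) * Q) =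
      U * Matrix.diagonal d * Uᵀ) :
    (Uᵀ * (Rᵀ)⁻¹) * cov X * (Uᵀ * (Rᵀ)⁻¹)ᵀ = 1 ∧
    (Uᵀ * (Rᵀ)⁻¹) * covW w X * (Uᵀ * (Rᵀ)⁻¹)ᵀ = Matrix.diagonal d := by
  have hn1 : (0 : ℝ) < (n : ℝ) - 1 := by
    have h2 : (2 : ℕ) ≤ n := by omega
    have : (2 : ℝ) ≤ (n : ℝ) := by exact_mod_cast h2
    linarith
  set c : ℝ := ((n : ℝ) - 1) ^ (-(1 : ℝ)/2) with hc
  have hc0 : c ≠ 0 := ne_of_gt (Real.rpow_pos_of_pos hn1 _)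
  have hcc : c * c = ((n : ℝ) - 1)⁻¹ := by
    rw [hc, ← Real.rpow_add hn1]
    norm_num [Real.rpow_neg_one]
  have hXT : Xᵀ = c⁻¹ • (Q * R) := by
    rw [← hQR, smul_smul, inv_mul_cancel₀ hc0, one_smul]
  have hX : X = c⁻¹ • (Rᵀ * Qᵀ) := by
    have := congrArg Matrix.transpose hXT
    rwa [transpose_transpose, transpose_smul, transpose_mul] at this
  have hcov : cov X = Rᵀ * R := by
    have hs : ((n : ℝ) - 1)⁻¹ * c⁻¹ * c⁻¹ = 1 := by
      rw [mul_assoc, ← mul_inv, hcc, inv_inv, inv_mul_cancel₀ (ne_of_gt hn1)]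
    rw [cov, hX, transpose_smul, transpose_mul, transpose_transpose, transpose_transpose,
      Matrix.smul_mul, Matrix.mul_smul, smul_smul, smul_smul, hs, one_smul]
    rw [Matrix.mul_assoc Rᵀ Qᵀ, ← Matrix.mul_assoc Qᵀ Q, hQ, Matrix.one_mul]
  have hRT : IsUnit Rᵀ.det := by rwa [Matrix.det_transpose]
  have hRtinv : (Rᵀ)⁻¹ * Rᵀ = 1 := Matrix.nonsing_inv_mul _ hRT
  have hRinv : R * R⁻¹ = 1 := Matrix.mul_nonsing_inv _ hRdet
  have hBt : (Uᵀ * (Rᵀ)⁻¹)ᵀ = R⁻¹ * U := by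
    rw [transpose_mul, transpose_transpose, Matrix.transpose_nonsing_inv, transpose_transpose]
  have key : ∀ M : Matrix (Fin p) (Fin p) ℝ,
      (Uᵀ * (Rᵀ)⁻¹) * (Rᵀ * M * R) * (Uᵀ * (Rᵀ)⁻¹)ᵀ = Uᵀ * (M * U) := by
    intro M
    rw [hBt]
    simp only [Matrix.mul_assoc]
    rw [← Matrix.mul_assoc R R⁻¹, hRinv, Matrix.one_mul,
      ← Matrix.mul_assoc (Rᵀ)⁻¹ Rᵀ, hRtinv, Matrix.one_mul]
  constructor
  · have h1 : cov X = Rᵀ * 1 * R := by rw [hcov, Matrix.mul_one]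
    rw [h1, key, Matrix.one_mul, hU]
  · have hcovinv : (cov X)⁻¹ = R⁻¹ * (Rᵀ)⁻¹ := by
      rw [hcov, Matrix.mul_inv_rev]
    have hxi : ∀ i : Fin n, (fun k => X k i) = c⁻¹ • (Rᵀ *ᵥ (fun j => Q i j)) := by
      intro i
      funext k
      rw [hX]
      simp [mulVec, dotProduct, mul_apply, Finset.mul_sum]
    have hD : ∀ i, mahalanobisSq X i = ((n : ℝ) - 1) * ∑ j, (Q i j) ^ 2 := by
      intro i
      rw [mahalanobisSq, hcovinv, hxi i]
      rw [mulVec_smul, smul_dotProduct, dotProduct_smul, smul_smul, smul_eq_mul,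
        ← mul_inv, hcc, inv_inv]
      congr 1
      rw [mulVec_mulVec, Matrix.mul_assoc, hRtinv, Matrix.mul_one]
      rw [dotProduct_comm, dotProduct_mulVec, vecMul_transpose, mulVec_mulVec, hRinv,
        Matrix.one_mulVec]
      simp [dotProduct, sq]
    have hcw : covW w X = Rᵀ * (U * Matrix.diagonal d * Uᵀ) * R := by
      rw [covW, ← hUD]
      have h1 : ∀ i : Fin n,
          w (mahalanobisSq X i) • vecMulVec (fun k => X k i) (fun k => X k i)
          = ((n : ℝ) - 1) • w (((n : ℝ) - 1) * ∑ j, (Q i j) ^ 2) •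
              (Rᵀ * vecMulVec (fun j => Q i j) (fun j => Q i j) * R) := by
        intro i
        rw [hD i, hxi i, aux_vmv_smul, ← mul_inv, hcc, inv_inv, aux_vmv, transpose_transpose,
          smul_comm]
      simp only [h1]
      rw [← Finset.smul_sum, smul_smul, Matrix.mul_smul, Matrix.smul_mul, aux_sum_vmv]
      rw [Matrix.mul_sum, Matrix.sum_mul]
      simp only [Matrix.mul_smul, Matrix.smul_mul]
      rw [mul_comm, ← div_eq_mul_inv]
    rw [hcw, key]
    simp only [Matrix.mul_assoc]
    rw [hU, Matrix.mul_one, ← Matrix.mul_assoc, hU, Matrix.one_mul]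
end

section
/- Let R be a p×p real upper triangular matrix satisfying the Businger–Golub pivoting condition, and let q < p. Let R₂₂ denote the trailing (p−q)×(p−q) block of R consisting of entries R k j with k, j > q (indices beyond position q). Then the Frobenius norm of R₂₂ is bounded by ‖R₂₂‖_F ≤ √(p−q) · |R (q+1) (q+1)|, where R (q+1) (q+1) is the (q+1)-st diagonal entry of R. -/
open Matrix

/-- For an upper triangular matrix `R` satisfying the Businger–Golub pivoting condition
and `q < p`, the Frobenius norm of the trailing `(p-q) × (p-q)` block `R₂₂` of `R`
(the entries beyond position `q`) is bounded by `√(p-q) · |R_{q+1,q+1}|`, where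
`R_{q+1,q+1}` is the `(q+1)`-st diagonal entry of `R` (index `q` counting from zero). -/
theorem stmt_12 {p : ℕ} (R : Matrix (Fin p) (Fin p) ℝ)
    (hR : R.BlockTriangular id)
    (hBG : ∀ i j : Fin p, i ≤ j → ∑ k ∈ Finset.Icc i j, (R k j) ^ 2 ≤ (R i i) ^ 2)
    (q : ℕ) (hq : q < p) :
    Real.sqrt (∑ k : Fin p, ∑ j : Fin p,
        if q ≤ (k : ℕ) ∧ q ≤ (j : ℕ) then (R k j) ^ 2 else 0) ≤
      Real.sqrt ((p : ℝ) - (q : ℝ)) * |R ⟨q, hq⟩ ⟨q, hq⟩| := by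
  set i₀ : Fin p := ⟨q, hq⟩ with hi₀
  have key : ∀ j : Fin p,
      (∑ k : Fin p, if q ≤ (k : ℕ) ∧ q ≤ (j : ℕ) then (R k j) ^ 2 else 0) ≤
        (if q ≤ (j : ℕ) then (R i₀ i₀) ^ 2 else 0) := by
    intro j
    by_cases hj : q ≤ (j : ℕ)
    · simp only [hj, and_true, if_true]
      have heq : (∑ k : Fin p, if q ≤ (k : ℕ) then (R k j) ^ 2 else 0)
          = ∑ k ∈ Finset.Icc i₀ j, (R k j) ^ 2 := by
        rw [← Finset.sum_filter]
        symm
        apply Finset.sum_subset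
        · intro k hk
          simp only [Finset.mem_Icc] at hk
          simp only [Finset.mem_filter, Finset.mem_univ, true_and]
          exact hk.1
        · intro k hk hnk
          simp only [Finset.mem_filter, Finset.mem_univ, true_and] at hk
          simp only [Finset.mem_Icc] at hnk
          have hik : i₀ ≤ k := hk
          have hjk : j < k := by
            by_contra h
            exact hnk ⟨hik, not_lt.mp h⟩
          have := hR (show (id j : Fin p) < id k from hjk)
          simp [this]
      rw [heq]
      exact hBG i₀ j hj
    · simp [hj]
  have hstep : (∑ k : Fin p, ∑ j : Fin p,
      if q ≤ (k : ℕ) ∧ q ≤ (j : ℕ) then (R k j) ^ 2 else 0)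
      ≤ ((p : ℝ) - (q : ℝ)) * (R i₀ i₀) ^ 2 := by
    rw [Finset.sum_comm]
    calc (∑ j : Fin p, ∑ k : Fin p,
        if q ≤ (k : ℕ) ∧ q ≤ (j : ℕ) then (R k j) ^ 2 else 0)
        ≤ ∑ j : Fin p, (if q ≤ (j : ℕ) then (R i₀ i₀) ^ 2 else 0) :=
          Finset.sum_le_sum fun j _ => key j
      _ = ((p : ℝ) - (q : ℝ)) * (R i₀ i₀) ^ 2 := by
          rw [← Finset.sum_filter, Finset.sum_const, nsmul_eq_mul]
          congr 1
          have : (Finset.univ.filter fun j : Fin p => q ≤ (j : ℕ)).card = p - q := by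
            have he : (Finset.univ.filter fun j : Fin p => q ≤ (j : ℕ)) = Finset.Ici i₀ := by
              ext j
              simp only [Finset.mem_filter, Finset.mem_univ, true_and, Finset.mem_Ici, Fin.le_def, hi₀]
            rw [he, Fin.card_Ici]
          rw [this, Nat.cast_sub hq.le]
  have hnn : (0 : ℝ) ≤ (R i₀ i₀) ^ 2 := sq_nonneg _
  calc Real.sqrt (∑ k : Fin p, ∑ j : Fin p,
      if q ≤ (k : ℕ) ∧ q ≤ (j : ℕ) then (R k j) ^ 2 else 0)
      ≤ Real.sqrt (((p : ℝ) - (q : ℝ)) * (R i₀ i₀) ^ 2) := Real.sqrt_le_sqrt hstep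
    _ = Real.sqrt ((p : ℝ) - (q : ℝ)) * |R i₀ i₀| := by
        rw [Real.sqrt_mul (sub_nonneg.mpr (by exact_mod_cast hq.le)), Real.sqrt_sq_eq_abs]
end

section
/- (Existence of the QR factorization with Businger–Golub column pivoting) Let A be an n×p real matrix with p ≤ n. Then there exist a permutation σ of Fin p, a matrix Q : Matrix (Fin n) (Fin p) ℝ with orthonormal columns (Qᵀ * Q = 1), and an upper triangular matrix R : Matrix (Fin p) (Fin p) ℝ such that the column-permuted matrix A·Π (with Π the permutation matrix of σ) equals Q * R and R satisfies the Businger–Golub condition: for all i ≤ j, ∑_{k=i}^{j} (R k j)^2 ≤ (R i i)^2. -/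
open Matrix
open scoped RealInnerProductSpace

section aux

variable {E : Type*} [NormedAddCommGroup E] [InnerProductSpace ℝ E]

private lemma my_norm_sum_sq {ι : Type*} [Fintype ι] [DecidableEq ι] {q : ι → E}
    (hq : Orthonormal ℝ q) (l : ι → ℝ) :
    ‖∑ k, l k • q k‖ ^ 2 = ∑ k, (l k) ^ 2 := by
  rw [← real_inner_self_eq_norm_sq, sum_inner]
  simp [inner_sum, sum_inner, real_inner_smul_left, real_inner_smul_right,
    orthonormal_iff_ite.mp hq, mul_ite, Finset.mul_sum, pow_two]

private lemma my_pyth (q c : E) (hq : ‖q‖ = 1) :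
    ⟪q, c⟫ ^ 2 + ‖c - ⟪q, c⟫ • q‖ ^ 2 = ‖c‖ ^ 2 := by
  have h := norm_sub_sq_real c (⟪q, c⟫ • q)
  rw [real_inner_smul_right, real_inner_comm q c, norm_smul, hq] at h
  have : ‖⟪q, c⟫‖ ^ 2 = ⟪q, c⟫ ^ 2 := by
    rw [Real.norm_eq_abs, sq_abs]
  nlinarith [this, h]

private lemma icc_succ_image {m : ℕ} (i j : Fin m) :
    Finset.Icc i.succ j.succ = (Finset.Icc i j).image Fin.succ := by
  ext k
  simp only [Finset.mem_Icc, Finset.mem_image]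
  constructor
  · rintro ⟨h1, h2⟩
    induction k using Fin.cases with
    | zero => exact absurd h1 (Fin.succ_pos i).not_ge
    | succ k' => exact ⟨k', ⟨Fin.succ_le_succ_iff.mp h1, Fin.succ_le_succ_iff.mp h2⟩, rfl⟩
  · rintro ⟨k', ⟨h1, h2⟩, rfl⟩
    exact ⟨Fin.succ_le_succ_iff.mpr h1, Fin.succ_le_succ_iff.mpr h2⟩

private lemma euc_sum_apply {ι κ : Type*} (s : Finset ι)
    (f : ι → EuclideanSpace ℝ κ) (i : κ) :
    (∑ k ∈ s, f k) i = ∑ k ∈ s, f k i := by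
  classical
  induction s using Finset.induction_on with
  | empty => simp [PiLp.zero_apply]
  | insert a s h ih => rw [Finset.sum_insert h, Finset.sum_insert h, PiLp.add_apply, ih]

end aux

private lemma key (E : Type*) [NormedAddCommGroup E] [InnerProductSpace ℝ E]
    [FiniteDimensional ℝ E] :
    ∀ (p : ℕ) (V : Submodule ℝ E), p ≤ Module.finrank ℝ V → ∀ (v : Fin p → E),
    (∀ j, v j ∈ V) →
    ∃ (σ : Equiv.Perm (Fin p)) (q : Fin p → E) (R : Matrix (Fin p) (Fin p) ℝ),
      Orthonormal ℝ q ∧ (∀ k, q k ∈ V) ∧ R.BlockTriangular id ∧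
      (∀ j, v (σ j) = ∑ k, R k j • q k) ∧
      (∀ i j, i ≤ j → ∑ k ∈ Finset.Icc i j, (R k j) ^ 2 ≤ (R i i) ^ 2) := by
  intro p
  induction p with
  | zero =>
    intro V hp v hv
    exact ⟨1, Fin.elim0, 0, ⟨fun i => i.elim0, fun i _ _ => i.elim0⟩,
      fun k => k.elim0, fun i _ _ => i.elim0, fun j => j.elim0, fun i _ _ => i.elim0⟩
  | succ p ih =>
    intro V hp v hv
    obtain ⟨j₀, -, hj₀⟩ := Finset.exists_max_image Finset.univ (fun j => ‖v j‖)
      ⟨0, Finset.mem_univ 0⟩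
    set τ : Equiv.Perm (Fin (p + 1)) := Equiv.swap 0 j₀ with hτ
    set w : Fin (p + 1) → E := fun j => v (τ j) with hw
    have hwV : ∀ j, w j ∈ V := fun j => hv _
    have hw0 : w 0 = v j₀ := by simp [hw, hτ, Equiv.swap_apply_left]
    have hwmax : ∀ j, ‖w j‖ ≤ ‖w 0‖ := by
      intro j
      rw [hw0]
      exact hj₀ (τ j) (Finset.mem_univ _)
    rcases eq_or_lt_of_le (norm_nonneg (w 0)) with h0 | hr
    · -- all columns are zero
      have hv0 : ∀ j, v j = 0 := by
        intro j
        have : w (τ.symm j) = v j := by simp [hw]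
        have h := hwmax (τ.symm j)
        rw [this, ← h0] at h
        exact norm_le_zero_iff.mp h
      refine ⟨1, fun k => ((stdOrthonormalBasis ℝ V) (Fin.castLE hp k) : E), 0, ?_, ?_, ?_, ?_, ?_⟩
      · rw [orthonormal_iff_ite]
        intro k l
        rw [← Submodule.coe_inner, orthonormal_iff_ite.mp (stdOrthonormalBasis ℝ V).orthonormal]
        simp [Fin.castLE_inj]
      · intro k; exact ((stdOrthonormalBasis ℝ V) (Fin.castLE hp k)).2
      · intro i j _; rfl
      · intro j; simp [hv0]
      · intro i j _; simp
    · -- pivot column is nonzero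
      set r : ℝ := ‖w 0‖ with hrdef
      set q₀ : E := r⁻¹ • w 0 with hq₀
      have hrne : r ≠ 0 := hr.ne'
      have hq₀n : ‖q₀‖ = 1 := by
        rw [hq₀, norm_smul, norm_inv, norm_norm]
        field_simp
        exact div_self hrne
      have hq₀V : q₀ ∈ V := V.smul_mem _ (hwV 0)
      have hinner_self : ⟪q₀, q₀⟫ = 1 := by
        rw [real_inner_self_eq_norm_sq, hq₀n]; norm_num
      set u : V := ⟨q₀, hq₀V⟩ with hu
      have hu0 : u ≠ 0 := by
        intro h
        have : q₀ = 0 := Subtype.ext_iff.mp h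
        rw [this, norm_zero] at hq₀n
        norm_num at hq₀n
      set W : Submodule ℝ V := (ℝ ∙ u)ᗮ with hW
      have hWrank : p ≤ Module.finrank ℝ W := by
        have h1 : 1 + Module.finrank ℝ W = Module.finrank ℝ V := by
          rw [hW, ← finrank_span_singleton hu0 (K := ℝ)]
          exact Submodule.finrank_add_finrank_orthogonal _
        omega
      set V' : Submodule ℝ E := W.map V.subtype with hV'
      have hV'rank : p ≤ Module.finrank ℝ V' := by
        rw [hV', Submodule.finrank_map_subtype_eq]; exact hWrank
      have hV'sub : ∀ x, x ∈ V' → x ∈ V ∧ ⟪q₀, x⟫ = 0 := by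
        rintro x ⟨y, hy, rfl⟩
        refine ⟨y.2, ?_⟩
        have h2 := (Submodule.mem_orthogonal_singleton_iff_inner_right).mp hy
        rw [Submodule.coe_inner] at h2
        exact h2
      have hV'mem : ∀ x, x ∈ V → ⟪q₀, x⟫ = 0 → x ∈ V' := by
        intro x hx hi
        exact ⟨⟨x, hx⟩, (Submodule.mem_orthogonal_singleton_iff_inner_right).mpr
          (by rw [Submodule.coe_inner]; exact hi), rfl⟩
      set b : Fin p → E := fun j => w j.succ - ⟪q₀, w j.succ⟫ • q₀ with hb
      have hbV' : ∀ j, b j ∈ V' := by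
        intro j
        refine hV'mem _ (Submodule.sub_mem _ (hwV _) (Submodule.smul_mem _ _ hq₀V)) ?_
        rw [hb]
        simp only [inner_sub_right, real_inner_smul_right, hinner_self]
        ring
      obtain ⟨σ', q', R', hq'on, hq'V, hR'tri, hdec', hBG'⟩ := ih V' hV'rank b hbV'
      have hq'perp : ∀ k, ⟪q₀, q' k⟫ = 0 := fun k => (hV'sub _ (hq'V k)).2
      have hq'V2 : ∀ k, q' k ∈ V := fun k => (hV'sub _ (hq'V k)).1
      set ρ : Equiv.Perm (Fin (p + 1)) := Equiv.Perm.decomposeFin.symm (0, σ') with hρ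
      have hρ0 : ρ 0 = 0 := Equiv.Perm.decomposeFin_symm_apply_zero 0 σ'
      have hρs : ∀ j, ρ j.succ = (σ' j).succ := by
        intro j
        rw [hρ, Equiv.Perm.decomposeFin_symm_apply_succ]
        simp
      set q : Fin (p + 1) → E := Fin.cons q₀ q' with hq
      set R : Matrix (Fin (p + 1)) (Fin (p + 1)) ℝ :=
        Matrix.of (Fin.cons (Fin.cons r (fun j => ⟪q₀, w (σ' j).succ⟫))
          (fun i => Fin.cons 0 (fun j => R' i j))) with hR
      have hR00 : R 0 0 = r := rfl
      have hR0s : ∀ j : Fin p, R 0 j.succ = ⟪q₀, w (σ' j).succ⟫ := fun j => by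
        simp [hR]
      have hRs0 : ∀ i : Fin p, R i.succ 0 = 0 := fun i => by simp [hR]
      have hRss : ∀ i j : Fin p, R i.succ j.succ = R' i j := fun i j => by simp [hR]
      have hnormb : ∀ j, ∑ k, (R' k j) ^ 2 = ‖b (σ' j)‖ ^ 2 := by
        intro j
        rw [hdec' j, my_norm_sum_sq hq'on]
      refine ⟨τ * ρ, q, R, ?_, ?_, ?_, ?_, ?_⟩
      · -- orthonormal
        rw [orthonormal_iff_ite]
        intro k l
        induction k using Fin.cases with
        | zero =>
          induction l using Fin.cases with
          | zero => simpa [hq] using hinner_self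
          | succ l' => simp [hq, hq'perp l', (Fin.succ_ne_zero l').symm]
        | succ k' =>
          induction l using Fin.cases with
          | zero =>
            rw [real_inner_comm]
            simp [hq, hq'perp k', Fin.succ_ne_zero k']
          | succ l' =>
            simpa [hq, Fin.succ_inj] using orthonormal_iff_ite.mp hq'on k' l'
      · -- membership
        intro k
        induction k using Fin.cases with
        | zero => simpa [hq] using hq₀V
        | succ k' => simpa [hq] using hq'V2 k'
      · -- triangular
        intro i j hij
        induction i using Fin.cases with
        | zero => exact absurd hij (Fin.not_lt_zero _)
        | succ i' =>
          induction j using Fin.cases with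
          | zero => exact hRs0 i'
          | succ j' =>
            rw [hRss]
            exact hR'tri (Fin.succ_lt_succ_iff.mp hij)
      · -- decomposition
        intro j
        have hmul : (τ * ρ) j = τ (ρ j) := rfl
        induction j using Fin.cases with
        | zero =>
          rw [hmul, hρ0]
          rw [Fin.sum_univ_succ]
          have : ∀ k' : Fin p, R (Fin.succ k') 0 • q (Fin.succ k') = 0 := by
            intro k'; rw [hRs0]; simp
          simp only [this, Finset.sum_const_zero, add_zero]
          rw [hR00]
          show w 0 = r • q 0
          rw [hq]
          simp only [Fin.cons_zero, hq₀, smul_smul, mul_inv_cancel₀ hrne, one_smul]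
        | succ j' =>
          rw [hmul, hρs]
          rw [Fin.sum_univ_succ]
          have h1 : ∀ k' : Fin p, R (Fin.succ k') (Fin.succ j') • q (Fin.succ k')
              = R' k' j' • q' k' := by
            intro k'; rw [hRss, hq]; simp
          simp only [h1]
          rw [← hdec' j', hR0s]
          show w (σ' j').succ = ⟪q₀, w (σ' j').succ⟫ • q 0 + b (σ' j')
          rw [hq, Fin.cons_zero, hb]
          simp only [hw]
          abel
      · -- Businger–Golub
        intro i j hij
        induction i using Fin.cases with
        | zero =>
          induction j using Fin.cases with
          | zero => simp
          | succ j' =>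
            have hle : ∑ k ∈ Finset.Icc 0 (Fin.succ j'), R k (Fin.succ j') ^ 2
                ≤ ∑ k, R k (Fin.succ j') ^ 2 :=
              Finset.sum_le_sum_of_subset_of_nonneg (Finset.subset_univ _)
                (fun _ _ _ => sq_nonneg _)
            refine hle.trans ?_
            rw [Fin.sum_univ_succ, hR0s]
            simp only [hRss]
            rw [hnormb j', hR00]
            have hp2 := my_pyth q₀ (w (σ' j').succ) hq₀n
            rw [hb]
            rw [hp2]
            have := hwmax (σ' j').succ
            have h2 : (0:ℝ) ≤ ‖w (σ' j').succ‖ := norm_nonneg _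
            nlinarith [this, h2, hr]
        | succ i' =>
          induction j using Fin.cases with
          | zero => exact absurd hij (by simp [Fin.le_def, Fin.succ_ne_zero])
          | succ j' =>
            rw [icc_succ_image, Finset.sum_image (fun _ _ _ _ h => Fin.succ_inj.mp h)]
            simp only [hRss]
            exact hBG' i' j' (Fin.succ_le_succ_iff.mp hij)

/-- Existence of the QR factorization with Businger–Golub column pivoting: for any
`n × p` real matrix `A` with `p ≤ n` there exist a permutation `σ` of the columns,
a matrix `Q` with orthonormal columns and an upper triangular matrix `R` such that the
column-permuted matrix `A·Π` (whose `j`-th column is the `σ j`-th column of `A`, i.e.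
`A.submatrix id σ`) equals `Q * R`, and `R` satisfies the Businger–Golub condition. -/
theorem stmt_13 {n p : ℕ} (hpn : p ≤ n) (A : Matrix (Fin n) (Fin p) ℝ) :
    ∃ (σ : Equiv.Perm (Fin p)) (Q : Matrix (Fin n) (Fin p) ℝ)
      (R : Matrix (Fin p) (Fin p) ℝ),
      Qᵀ * Q = 1 ∧
      R.BlockTriangular id ∧
      A.submatrix id σ = Q * R ∧
      ∀ i j : Fin p, i ≤ j → ∑ k ∈ Finset.Icc i j, (R k j) ^ 2 ≤ (R i i) ^ 2 := by
  set E := EuclideanSpace ℝ (Fin n)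
  have hrank : p ≤ Module.finrank ℝ (⊤ : Submodule ℝ E) := by
    rw [finrank_top, finrank_euclideanSpace_fin]
    exact hpn
  set v : Fin p → E := fun j => (WithLp.equiv 2 (Fin n → ℝ)).symm (fun i => A i j) with hv
  obtain ⟨σ, q, R, hon, -, htri, hdec, hBG⟩ := key E p ⊤ hrank v (fun j => trivial)
  refine ⟨σ, Matrix.of (fun i k => q k i), R, ?_, htri, ?_, hBG⟩
  · ext k l
    rw [Matrix.mul_apply, Matrix.one_apply]
    have h := orthonormal_iff_ite.mp hon k l
    rw [PiLp.inner_apply] at h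
    simpa [RCLike.inner_apply, starRingEnd_apply, mul_comm] using h
  · ext i j
    have h := congrArg (fun x => x i) (hdec j)
    have hsum : (∑ k, R k j • q k) i = ∑ k, R k j * q k i := by
      rw [euc_sum_apply]
      exact Finset.sum_congr rfl fun k _ => by rw [PiLp.smul_apply, smul_eq_mul]
    rw [hsum] at h
    simp only [Matrix.submatrix_apply, id_eq, Matrix.mul_apply, Matrix.of_apply]
    rw [show A i (σ j) = v (σ j) i from rfl, h]
    simp [mul_comm]
end

section
/- (Rank-revealing truncation) Let A be an n×p real matrix with p ≤ n, and suppose A = Q * R where Q : Matrix (Fin n) (Fin p) ℝ satisfies Qᵀ * Q = 1 and R is upper triangular satisfying the Businger–Golub condition. Then for every q < p there exists a matrix A' : Matrix (Fin n) (Fin p) ℝ with rank A' ≤ q such that ‖A − A'‖_F ≤ √(p−q) · |R (q+1) (q+1)|, where ‖·‖_F is the Frobenius norm. (A' is obtained by replacing the trailing block R₂₂ of R by zero.) -/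
open Matrix

lemma frob_trace {m k : Type*} [Fintype m] [Fintype k] (B : Matrix m k ℝ) :
    ∑ i, ∑ j, (B i j) ^ 2 = (Bᵀ * B).trace := by
  simp only [trace, diag, mul_apply, transpose_apply, sq]
  rw [Finset.sum_comm]

lemma card_filter_lt (p q : ℕ) (hq : q ≤ p) :
    (Finset.univ.filter (fun i : Fin p => i.1 < q)).card = q := by
  rw [Finset.card_filter]
  rw [Fin.sum_univ_eq_sum_range (fun i => if i < q then 1 else 0)]
  rw [Finset.sum_ite, Finset.sum_const, Finset.sum_const_zero, add_zero, smul_eq_mul, mul_one]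
  have : Finset.filter (fun i => i < q) (Finset.range p) = Finset.range q := by
    ext x; simp; omega
  rw [this, Finset.card_range]

/-- Rank-revealing truncation: if `A = Q * R` with `Q` having orthonormal columns and `R`
upper triangular satisfying the Businger–Golub condition, then for every `q < p` there is
a matrix `A'` of rank at most `q` with `‖A - A'‖_F ≤ √(p-q) · |R_{q+1,q+1}|` (the
`(q+1)`-st diagonal entry of `R`, index `q` counting from zero). -/
theorem stmt_14 {n p : ℕ} (hpn : p ≤ n)
    (A : Matrix (Fin n) (Fin p) ℝ)
    (Q : Matrix (Fin n) (Fin p) ℝ) (R : Matrix (Fin p) (Fin p) ℝ)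
    (hQ : Qᵀ * Q = 1)
    (hR : R.BlockTriangular id)
    (hA : A = Q * R)
    (hBG : ∀ i j : Fin p, i ≤ j → ∑ k ∈ Finset.Icc i j, (R k j) ^ 2 ≤ (R i i) ^ 2) :
    ∀ (q : ℕ) (hq : q < p),
      ∃ A' : Matrix (Fin n) (Fin p) ℝ,
        A'.rank ≤ q ∧
        Real.sqrt (∑ i, ∑ j, (A i j - A' i j) ^ 2) ≤
          Real.sqrt ((p : ℝ) - (q : ℝ)) * |R ⟨q, hq⟩ ⟨q, hq⟩| := by
  intro q hq
  set qf : Fin p := ⟨q, hq⟩ with hqf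
  set d : Fin p → ℝ := fun i => if i.1 < q then 1 else 0 with hd
  refine ⟨Q * (diagonal d * R), ?_, ?_⟩
  · calc (Q * (diagonal d * R)).rank ≤ (diagonal d * R).rank := rank_mul_le_right _ _
      _ ≤ (diagonal d).rank := rank_mul_le_left _ _
      _ = Fintype.card {i : Fin p // d i ≠ 0} := rank_diagonal d
      _ = q := by
          rw [Fintype.card_subtype]
          rw [show (Finset.univ.filter (fun i : Fin p => d i ≠ 0)) =
              (Finset.univ.filter (fun i : Fin p => i.1 < q)) from by
            apply Finset.filter_congr; intro i _
            simp only [hd]; split <;> simp_all]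
          exact card_filter_lt p q hq.le
  · set M : Matrix (Fin p) (Fin p) ℝ := R - diagonal d * R with hM
    have hMapp : ∀ i j, M i j = if i.1 < q then 0 else R i j := by
      intro i j
      simp only [hM, Matrix.sub_apply, diagonal_mul, hd]
      split <;> simp
    have hdiff : A - Q * (diagonal d * R) = Q * M := by
      rw [hA, hM, Matrix.mul_sub]
    have h1 : ∑ i, ∑ j, (A i j - (Q * (diagonal d * R)) i j) ^ 2
        = ∑ i, ∑ j, (M i j) ^ 2 := by
      have : ∀ i j, A i j - (Q * (diagonal d * R)) i j = (Q * M) i j := by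
        intro i j; rw [← hdiff]; simp [Matrix.sub_apply]
      simp_rw [this]
      rw [frob_trace, frob_trace, transpose_mul, Matrix.mul_assoc,
        ← Matrix.mul_assoc Qᵀ Q M, hQ, Matrix.one_mul]
    rw [h1, Finset.sum_comm]
    have hinner : ∀ j : Fin p, (∑ i, (M i j) ^ 2) ≤
        (if q ≤ j.1 then (R qf qf) ^ 2 else 0) := by
      intro j
      by_cases hj : q ≤ j.1
      · rw [if_pos hj]
        have hqfj : qf ≤ j := hj
        have hsub : ∑ i, (M i j) ^ 2 = ∑ i ∈ Finset.Icc qf j, (R i j) ^ 2 := by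
          rw [← Finset.sum_subset (Finset.subset_univ (Finset.Icc qf j))]
          · apply Finset.sum_congr rfl
            intro i hi
            rw [Finset.mem_Icc] at hi
            rw [hMapp]
            rw [if_neg (by exact Nat.not_lt.mpr hi.1)]
          · intro i _ hi
            rw [Finset.mem_Icc] at hi
            push_neg at hi
            rw [hMapp]
            by_cases hiq : i.1 < q
            · simp [hiq]
            · rw [if_neg hiq]
              have : j < i := hi (Nat.not_lt.mp hiq)
              rw [hR this]
              simp
        rw [hsub]
        exact hBG qf j hqfj
      · rw [if_neg hj]
        apply le_of_eq
        apply Finset.sum_eq_zero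
        intro i _
        rw [hMapp]
        by_cases hiq : i.1 < q
        · simp [hiq]
        · rw [if_neg hiq]
          have : j < i := by
            rw [Fin.lt_def]; omega
          rw [hR this]
          simp
    have h2 : ∑ j, ∑ i, (M i j) ^ 2 ≤ ((p - q : ℕ) : ℝ) * (R qf qf) ^ 2 := by
      calc ∑ j, ∑ i, (M i j) ^ 2 ≤ ∑ j : Fin p, (if q ≤ j.1 then (R qf qf) ^ 2 else 0) :=
            Finset.sum_le_sum (fun j _ => hinner j)
        _ = ((p - q : ℕ) : ℝ) * (R qf qf) ^ 2 := by
            rw [Finset.sum_ite, Finset.sum_const, Finset.sum_const_zero, add_zero,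
              nsmul_eq_mul]
            congr 1
            have hcomp : (Finset.univ.filter (fun j : Fin p => q ≤ j.1)).card
                = p - q := by
              have := Finset.card_filter_add_card_filter_not
                (s := (Finset.univ : Finset (Fin p))) (p := fun j : Fin p => j.1 < q)
              rw [card_filter_lt p q hq.le, Finset.card_univ, Fintype.card_fin] at this
              have heq : (Finset.univ.filter (fun j : Fin p => q ≤ j.1))
                  = (Finset.univ.filter (fun j : Fin p => ¬ j.1 < q)) := by
                apply Finset.filter_congr; intro i _; simp [Nat.not_lt]
              rw [heq]
              omega
            rw [hcomp]
    calc Real.sqrt (∑ j, ∑ i, (M i j) ^ 2)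
        ≤ Real.sqrt (((p - q : ℕ) : ℝ) * (R qf qf) ^ 2) := Real.sqrt_le_sqrt h2
      _ = Real.sqrt ((p : ℝ) - (q : ℝ)) * |R qf qf| := by
          rw [Real.sqrt_mul (by positivity), Real.sqrt_sq_eq_abs,
            Nat.cast_sub hq.le]
end

section
/- Let p, n be natural numbers with 0 < p < n, let X be a centered p×n real data matrix with QR factorization (1/√(n−1)) • Xᵀ = Q * R where Qᵀ * Q = 1 and R is upper triangular, and suppose R = U * Σ * Vᵀ is a singular value decomposition of R with U, V orthogonal p×p matrices and Σ diagonal with nonnegative entries. Then (i) (1/√(n−1)) • Xᵀ = (Q * U) * Σ * Vᵀ with (Q * U)ᵀ * (Q * U) = 1 (an economy-size SVD of Xᵀ), (ii) cov(X) = V * Σ² * Vᵀ, and (iii) V * Σ * Vᵀ is the positive semidefinite symmetric square root of cov(X). -/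
open Matrix

/-- If `R = U * Σ * Vᵀ` is an SVD of the triangular factor `R`, then
(i) `(1/√(n-1)) • Xᵀ = (Q * U) * Σ * Vᵀ` with `Q * U` having orthonormal columns
(an economy-size SVD of `Xᵀ`), (ii) `cov(X) = V * Σ² * Vᵀ`, and (iii) `V * Σ * Vᵀ` is the
positive semidefinite symmetric square root of `cov(X)`. -/
theorem stmt_15 {p n : ℕ} (hp : 0 < p) (hpn : p < n)
    (X : Matrix (Fin p) (Fin n) ℝ)
    (hXc : X *ᵥ (fun _ => (1 : ℝ)) = 0)
    (Q : Matrix (Fin n) (Fin p) ℝ) (R : Matrix (Fin p) (Fin p) ℝ)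
    (hQ : Qᵀ * Q = 1)
    (hR : R.BlockTriangular id)
    (hQR : ((n : ℝ) - 1) ^ (-(1 : ℝ)/2) • Xᵀ = Q * R)
    (U V : Matrix (Fin p) (Fin p) ℝ) (σ : Fin p → ℝ)
    (hU : Uᵀ * U = 1) (hV : Vᵀ * V = 1) (hσ : ∀ i, 0 ≤ σ i)
    (hSVD : R = U * Matrix.diagonal σ * Vᵀ) :
    (((n : ℝ) - 1) ^ (-(1 : ℝ)/2) • Xᵀ = (Q * U) * Matrix.diagonal σ * Vᵀ ∧
      (Q * U)ᵀ * (Q * U) = 1) ∧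
    cov X = V * (Matrix.diagonal σ * Matrix.diagonal σ) * Vᵀ ∧
    ((V * Matrix.diagonal σ * Vᵀ).PosSemidef ∧
      (V * Matrix.diagonal σ * Vᵀ) * (V * Matrix.diagonal σ * Vᵀ) = cov X) := by
  have hn1 : (0:ℝ) < (n:ℝ) - 1 := by
    have h2 : 2 ≤ n := by omega
    have : (2:ℝ) ≤ (n:ℝ) := by exact_mod_cast h2
    linarith
  set c : ℝ := ((n : ℝ) - 1) ^ (-(1 : ℝ)/2) with hc
  have hcc : c * c = ((n:ℝ) - 1)⁻¹ := by
    rw [hc, ← Real.rpow_add hn1]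
    norm_num [Real.rpow_neg_one]
  -- key: cov X = Rᵀ R
  have hRR : ((n:ℝ) - 1)⁻¹ • (X * Xᵀ) = Rᵀ * R := by
    have h1 : (c • Xᵀ)ᵀ * (c • Xᵀ) = Rᵀ * R := by
      rw [hQR, Matrix.transpose_mul, Matrix.mul_assoc, ← Matrix.mul_assoc Qᵀ, hQ,
        Matrix.one_mul]
    rw [Matrix.transpose_smul, Matrix.transpose_transpose, Matrix.smul_mul,
      Matrix.mul_smul, smul_smul, hcc] at h1
    exact h1
  have hcov : cov X = V * (Matrix.diagonal σ * Matrix.diagonal σ) * Vᵀ := by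
    rw [cov, hRR, hSVD, Matrix.transpose_mul, Matrix.transpose_mul,
      Matrix.transpose_transpose, Matrix.diagonal_transpose]
    simp only [Matrix.mul_assoc]
    rw [← Matrix.mul_assoc Uᵀ U, hU, Matrix.one_mul]
  refine ⟨⟨by rw [hQR, hSVD, Matrix.mul_assoc, Matrix.mul_assoc, Matrix.mul_assoc], ?_⟩,
    hcov, ?_, ?_⟩
  · rw [Matrix.transpose_mul, Matrix.mul_assoc, ← Matrix.mul_assoc Qᵀ, hQ,
      Matrix.one_mul, hU]
  · have hd : (Matrix.diagonal σ).PosSemidef := by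
      rw [Matrix.posSemidef_diagonal_iff]
      exact hσ
    have := hd.mul_mul_conjTranspose_same V
    simpa [Matrix.conjTranspose_eq_transpose_of_trivial, Matrix.mul_assoc] using this
  · rw [hcov]
    simp only [Matrix.mul_assoc]
    rw [← Matrix.mul_assoc Vᵀ V, hV, Matrix.one_mul]
end

section
/- (Affine equivariance of the one-step M-scatter matrix) Let p, n be natural numbers with 0 < p < n, let X be a centered p×n real data matrix with invertible covariance matrix cov(X), let w : ℝ → ℝ, and let A be an invertible p×p real matrix. Then cov_w(A * X) = A * cov_w(X) * Aᵀ. -/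
open Matrix

lemma cov_mul {p n : ℕ} (X : Matrix (Fin p) (Fin n) ℝ) (A : Matrix (Fin p) (Fin p) ℝ) :
    cov (A * X) = A * cov X * Aᵀ := by
  simp [cov, Matrix.transpose_mul, Matrix.mul_smul, Matrix.smul_mul, Matrix.mul_assoc]

lemma maha_mul {p n : ℕ} (X : Matrix (Fin p) (Fin n) ℝ)
    (A : Matrix (Fin p) (Fin p) ℝ) (hA : IsUnit A.det) (i : Fin n) :
    mahalanobisSq (A * X) i = mahalanobisSq X i := by
  have hv : (fun k => (A * X) k i) = A *ᵥ (fun k => X k i) := by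
    ext k; simp [Matrix.mul_apply, Matrix.mulVec, dotProduct]
  have hAT : IsUnit Aᵀ.det := by simpa using hA
  have hinv : (cov (A * X))⁻¹ = Aᵀ⁻¹ * (cov X)⁻¹ * A⁻¹ := by
    rw [cov_mul, Matrix.mul_inv_rev, Matrix.mul_inv_rev, Matrix.mul_assoc]
  set v : Fin p → ℝ := fun k => X k i
  rw [mahalanobisSq, hv, hinv, Matrix.mulVec_mulVec]
  have h1 : Aᵀ * Aᵀ⁻¹ = 1 := Matrix.mul_nonsing_inv _ hAT
  have h2 : Aᵀ⁻¹ * (cov X)⁻¹ * A⁻¹ * A = Aᵀ⁻¹ * (cov X)⁻¹ := by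
    rw [Matrix.mul_assoc, Matrix.nonsing_inv_mul _ hA, Matrix.mul_one]
  have h3 : A *ᵥ v = v ᵥ* Aᵀ := by rw [← Matrix.mulVec_transpose, Matrix.transpose_transpose]
  rw [h2, h3, Matrix.dotProduct_mulVec, Matrix.vecMul_vecMul, ← Matrix.mul_assoc, h1,
    Matrix.one_mul, ← Matrix.dotProduct_mulVec]
  rfl

/-- Affine equivariance of the one-step M-scatter matrix: for any invertible `p × p`
matrix `A`, `cov_w(A * X) = A * cov_w(X) * Aᵀ`. -/
theorem stmt_17 {p n : ℕ} (hp : 0 < p) (hpn : p < n)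
    (X : Matrix (Fin p) (Fin n) ℝ)
    (hXc : X *ᵥ (fun _ => (1 : ℝ)) = 0)
    (hcov : IsUnit (cov X).det)
    (w : ℝ → ℝ)
    (A : Matrix (Fin p) (Fin p) ℝ) (hA : IsUnit A.det) :
    covW w (A * X) = A * covW w X * Aᵀ := by
  have hv : ∀ i, (fun k => (A * X) k i) = A *ᵥ (fun k => X k i) := by
    intro i; ext k; simp [Matrix.mul_apply, Matrix.mulVec, dotProduct]
  have hvv : ∀ i, vecMulVec (A *ᵥ (fun k => X k i)) (A *ᵥ (fun k => X k i))
      = A * vecMulVec (fun k => X k i) (fun k => X k i) * Aᵀ := by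
    intro i; ext k l
    simp [Matrix.vecMulVec_apply, Matrix.mul_apply, Matrix.mulVec, dotProduct,
      Finset.sum_mul, Finset.mul_sum]
    apply Finset.sum_congr rfl; intro a _
    apply Finset.sum_congr rfl; intro b _
    ring
  simp only [covW, maha_mul X A hA, hv, hvv, Matrix.smul_mul, Matrix.mul_smul,
    Matrix.mul_sum, Matrix.sum_mul]
end

section
/- (Affine invariance of the ICS eigenvalues) Let p, n be natural numbers with 0 < p < n, let X be a centered p×n real data matrix whose covariance matrix cov(X) is positive definite, let w : ℝ → ℝ, and let A be an invertible p×p real matrix. Define for a centered data matrix Y with positive definite cov(Y) the matrix M(Y) = cov(Y)^{−1/2} * cov_w(Y) * cov(Y)^{−1/2}, where cov(Y)^{−1/2} is the inverse of the positive semidefinite symmetric square root of cov(Y). Then M(A * X) and M(X) have the same characteristic polynomial; in particular the ICS eigenvalues are invariant under invertible linear transformations of the data. -/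
open Matrix

open Polynomial in

lemma my_charpoly_conj {m : Type*} [Fintype m] [DecidableEq m]
    (P M : Matrix m m ℝ) (hP : IsUnit P.det) :
    (P * M * P⁻¹).charpoly = M.charpoly := by
  have hPP : P * P⁻¹ = 1 := mul_nonsing_inv P hP
  have h1 : (P.map (C : ℝ →+* ℝ[X])) * (P⁻¹.map C) = 1 := by
    rw [← Matrix.map_mul, hPP, Matrix.map_one _ (map_zero _) (map_one _)]
  have key : charmatrix (P * M * P⁻¹) = P.map C * charmatrix M * P⁻¹.map C := by
    rw [charmatrix]
    rw [charmatrix, Matrix.mul_sub, Matrix.sub_mul]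
    congr 1
    · rw [Matrix.mul_assoc, scalar_commute X (fun r => (Commute.all _ _)) _]
      rw [← Matrix.mul_assoc, h1, Matrix.one_mul]
    · simp [RingHom.mapMatrix_apply, Matrix.map_mul, Matrix.mul_assoc]
  rw [Matrix.charpoly, Matrix.charpoly, key, det_mul, det_mul]
  have h2 : (P.map (C : ℝ →+* ℝ[X])).det * (P⁻¹.map C).det = 1 := by
    rw [← det_mul, h1, det_one]
  calc (P.map (C : ℝ →+* ℝ[X])).det * (charmatrix M).det * (P⁻¹.map C).det
      = (charmatrix M).det * ((P.map C).det * (P⁻¹.map C).det) := by ring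
    _ = (charmatrix M).det := by rw [h2, mul_one]


/-- Affine invariance of the ICS eigenvalues: with `S₁` and `S₂` the positive semidefinite
symmetric square roots of `cov(X)` and `cov(A * X)` respectively, the ICS matrices
`M(A * X) = S₂⁻¹ * cov_w(A * X) * S₂⁻¹` and `M(X) = S₁⁻¹ * cov_w(X) * S₁⁻¹` have the same
characteristic polynomial, so the ICS eigenvalues are invariant under invertible linear
transformations of the data. -/
theorem stmt_18 {p n : ℕ} (hp : 0 < p) (hpn : p < n)
    (X : Matrix (Fin p) (Fin n) ℝ)
    (hXc : X *ᵥ (fun _ => (1 : ℝ)) = 0)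
    (hcov : (cov X).PosDef)
    (w : ℝ → ℝ)
    (A : Matrix (Fin p) (Fin p) ℝ) (hA : IsUnit A.det)
    (S₁ S₂ : Matrix (Fin p) (Fin p) ℝ)
    (hS₁ : S₁.PosSemidef) (hS₁sq : S₁ * S₁ = cov X)
    (hS₂ : S₂.PosSemidef) (hS₂sq : S₂ * S₂ = cov (A * X)) :
    (S₂⁻¹ * covW w (A * X) * S₂⁻¹).charpoly = (S₁⁻¹ * covW w X * S₁⁻¹).charpoly := by
  -- cov (A * X) = A * cov X * Aᵀ
  have hcovA : cov (A * X) = A * cov X * Aᵀ := by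
    simp only [cov, transpose_mul, Matrix.mul_smul, Matrix.smul_mul]
    rw [Matrix.mul_assoc, Matrix.mul_assoc, Matrix.mul_assoc]
  -- determinants
  have hCdet : IsUnit (cov X).det := hcov.det_pos.ne'.isUnit
  have hS1det : IsUnit S₁.det := by
    have h : S₁.det * S₁.det = (cov X).det := by rw [← det_mul, hS₁sq]
    exact isUnit_of_mul_isUnit_left (h ▸ hCdet)
  have hS2det : IsUnit S₂.det := by
    have h : S₂.det * S₂.det = (cov (A * X)).det := by rw [← det_mul, hS₂sq]
    rw [hcovA, det_mul, det_mul, det_transpose] at h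
    exact isUnit_of_mul_isUnit_left (h ▸ (hA.mul hCdet |>.mul hA))
  have hAT : IsUnit Aᵀ.det := by rwa [det_transpose]
  -- columns
  have hcol : ∀ i : Fin n, (fun k => (A * X) k i) = A *ᵥ (fun k => X k i) := by
    intro i; funext k; simp [Matrix.mul_apply, Matrix.mulVec, dotProduct]
  -- inverse of cov (A * X)
  have hinv : (cov (A * X))⁻¹ = Aᵀ⁻¹ * ((cov X)⁻¹ * A⁻¹) := by
    rw [hcovA, Matrix.mul_inv_rev, Matrix.mul_inv_rev]
  -- Mahalanobis invariance
  have hmah : ∀ i, mahalanobisSq (A * X) i = mahalanobisSq X i := by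
    intro i
    simp only [mahalanobisSq, hcol i, hinv]
    rw [mulVec_mulVec, ← vecMul_transpose, dotProduct_mulVec, vecMul_vecMul]
    conv_rhs => rw [dotProduct_mulVec]
    congr 1
    rw [← Matrix.mul_assoc Aᵀ, ← Matrix.mul_assoc Aᵀ, mul_nonsing_inv _ hAT,
      Matrix.one_mul, Matrix.mul_assoc, nonsing_inv_mul _ hA, Matrix.mul_one]
  -- covW transformation
  have hcovW : covW w (A * X) = A * covW w X * Aᵀ := by
    simp only [covW, hmah, hcol, Matrix.mul_smul, Matrix.smul_mul, Matrix.mul_sum,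
      Matrix.sum_mul]
    congr 1
    apply Finset.sum_congr rfl
    intro i _
    congr 1
    ext a b
    simp only [vecMulVec_apply, Matrix.mul_apply, Matrix.mulVec, dotProduct,
      Finset.sum_mul, Finset.mul_sum, transpose_apply]
    apply Finset.sum_congr rfl; intro k _
    apply Finset.sum_congr rfl; intro l _
    ring
  -- key cancellation identity
  have hS2i : S₂ * S₂⁻¹ = 1 := mul_nonsing_inv _ hS2det
  have hc : A * (cov X * (Aᵀ * S₂⁻¹)) = S₂ := by
    rw [← Matrix.mul_assoc, ← Matrix.mul_assoc, ← hcovA, ← hS₂sq, Matrix.mul_assoc,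
      hS2i, Matrix.mul_one]
  have key : (cov X)⁻¹ * (A⁻¹ * S₂) = Aᵀ * S₂⁻¹ := by
    calc (cov X)⁻¹ * (A⁻¹ * S₂)
        = (cov X)⁻¹ * (A⁻¹ * (A * (cov X * (Aᵀ * S₂⁻¹)))) := by rw [hc]
      _ = Aᵀ * S₂⁻¹ := by
          rw [← Matrix.mul_assoc A⁻¹ A, nonsing_inv_mul _ hA, Matrix.one_mul,
            ← Matrix.mul_assoc, nonsing_inv_mul _ hCdet, Matrix.one_mul]
  -- the conjugating matrix
  set B : Matrix (Fin p) (Fin p) ℝ := S₂⁻¹ * A * S₁ with hB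
  have hBdet : IsUnit B.det := by
    rw [hB, det_mul, det_mul]
    exact ((isUnit_nonsing_inv_det S₂ hS2det).mul hA).mul hS1det
  have hBinv : B⁻¹ = S₁⁻¹ * (A⁻¹ * S₂) := by
    rw [hB, Matrix.mul_inv_rev, Matrix.mul_inv_rev,
      nonsing_inv_nonsing_inv _ hS2det]
  have hfinal : S₂⁻¹ * covW w (A * X) * S₂⁻¹ = B * (S₁⁻¹ * covW w X * S₁⁻¹) * B⁻¹ := by
    rw [hcovW, hBinv, hB]
    have h1 : S₁ * S₁⁻¹ = 1 := mul_nonsing_inv _ hS1det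
    have h2 : S₁⁻¹ * S₁⁻¹ = (cov X)⁻¹ := by rw [← Matrix.mul_inv_rev, hS₁sq]
    simp only [Matrix.mul_assoc]
    congr 1
    congr 1
    rw [← Matrix.mul_assoc S₁ S₁⁻¹, h1, Matrix.one_mul]
    congr 1
    rw [← Matrix.mul_assoc S₁⁻¹ S₁⁻¹, h2, key]
  rw [hfinal]
  exact my_charpoly_conj B (S₁⁻¹ * covW w X * S₁⁻¹) hBdet
end
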